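/- Let A be a d×d real matrix with ‖A‖₂ < 1 and let i_1 > i_2 > ... > i_t ≥ 1 (t ≥ 2). With P = [P_{i_1} ... P_{i_t}] defined by stacking powers of A as in the CVAR analysis (the j-th d×d block of P_{i_k} equals A^{i_k − j} for j ≤ i_k and 0 otherwise), the largest eigenvalue of P^T P satisfies λ_1(P^T P) ≤ 1/(1 − ‖A‖₂)². -/

import Mathlib

open Matrix Finset

/-- The spectral norm (operator norm induced by the Euclidean norm) of a real
square matrix. -/
noncomputable def specNorm {n : Type*} [Fintype n] [DecidableEq n]
    (M : Matrix n n ℝ) : ℝ :=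
  ‖Matrix.toEuclideanCLM (𝕜 := ℝ) M‖


lemma geom_sum_inj {a : ℝ} (ha0 : 0 ≤ a) (ha1 : a < 1) {ι : Type*} (s : Finset ι)
    (f : ι → ℕ) (hf : Set.InjOn f s) : ∑ i ∈ s, a ^ f i ≤ (1 - a)⁻¹ := by
  rw [← Finset.sum_image (fun x hx y hy h => hf hx hy h)]
  calc ∑ m ∈ s.image f, a ^ m ≤ ∑' n : ℕ, a ^ n :=
        (summable_geometric_of_lt_one ha0 ha1).sum_le_tsum _ (fun _ _ => pow_nonneg ha0 _)
    _ = (1 - a)⁻¹ := tsum_geometric_of_lt_one ha0 ha1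

lemma pow_mulVec_norm_le {d : ℕ} (A : Matrix (Fin d) (Fin d) ℝ) (e : ℕ) (u : Fin d → ℝ) :
    ‖(WithLp.equiv 2 (Fin d → ℝ)).symm ((A ^ e) *ᵥ u)‖ ≤
      specNorm A ^ e * ‖(WithLp.equiv 2 (Fin d → ℝ)).symm u‖ := by
  induction e generalizing u with
  | zero => simp
  | succ e ih =>
    have h1 : (A ^ (e + 1)) *ᵥ u = (A ^ e) *ᵥ (A *ᵥ u) := by
      rw [mulVec_mulVec, ← pow_succ]
    have h2 : ‖(WithLp.equiv 2 (Fin d → ℝ)).symm (A *ᵥ u)‖ ≤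
        specNorm A * ‖(WithLp.equiv 2 (Fin d → ℝ)).symm u‖ := by
      have := (Matrix.toEuclideanCLM (𝕜 := ℝ) A).le_opNorm
        ((WithLp.equiv 2 (Fin d → ℝ)).symm u)
      rwa [WithLp.equiv_symm_apply, Matrix.toEuclideanCLM_toLp] at this
    calc ‖(WithLp.equiv 2 (Fin d → ℝ)).symm ((A ^ (e + 1)) *ᵥ u)‖
        = ‖(WithLp.equiv 2 (Fin d → ℝ)).symm ((A ^ e) *ᵥ (A *ᵥ u))‖ := by rw [h1]
      _ ≤ specNorm A ^ e * ‖(WithLp.equiv 2 (Fin d → ℝ)).symm (A *ᵥ u)‖ := ih _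
      _ ≤ specNorm A ^ e * (specNorm A * ‖(WithLp.equiv 2 (Fin d → ℝ)).symm u‖) :=
          mul_le_mul_of_nonneg_left h2 (pow_nonneg (norm_nonneg _) _)
      _ = specNorm A ^ (e + 1) * ‖(WithLp.equiv 2 (Fin d → ℝ)).symm u‖ := by ring

/-- For `‖A‖₂ < 1` and `i_1 > … > i_t ≥ 1` (`t ≥ 2`), with
`P = [P_{i_1} … P_{i_t}]` the horizontal concatenation of vertical stacks of
powers of `A`, the largest eigenvalue of `PᵀP` is at most `1/(1 − ‖A‖₂)²`. -/
theorem eigenvalue_PtP_le {d t : ℕ} (ht : 2 ≤ t)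
    (A : Matrix (Fin d) (Fin d) ℝ) (hA : specNorm A < 1)
    (idx : Fin t → ℕ) (hanti : StrictAnti idx) (hpos : ∀ k, 1 ≤ idx k)
    (n₁ : ℕ) (hn₁ : n₁ = idx ⟨0, by omega⟩)
    (P : Matrix (Fin n₁ × Fin d) (Fin t × Fin d) ℝ)
    (hP : ∀ (j : Fin n₁) (x : Fin d) (k : Fin t) (y : Fin d),
      P (j, x) (k, y) =
        if j.1 + 1 ≤ idx k then (A ^ (idx k - 1 - j.1)) x y else 0)
    (hH : (Pᵀ * P).IsHermitian) :
    ∀ i, hH.eigenvalues i ≤ 1 / (1 - specNorm A) ^ 2 := by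
  intro i
  set a := specNorm A with ha
  have ha0 : 0 ≤ a := norm_nonneg _
  have hsub : 0 < 1 - a := by linarith
  set v : (Fin t × Fin d) → ℝ := ⇑(hH.eigenvectorBasis i) with hv
  -- unit norm
  have hunit : ∑ p, v p ^ 2 = 1 := by
    have h1 : ‖hH.eigenvectorBasis i‖ = 1 := hH.eigenvectorBasis.orthonormal.1 i
    have h2 := EuclideanSpace.norm_eq (hH.eigenvectorBasis i)
    rw [h1] at h2
    have h3 : ∑ p, ‖v p‖ ^ 2 = 1 := by
      have := congrArg (· ^ 2) h2.symm
      simpa [Real.sq_sqrt (Finset.sum_nonneg fun _ _ => sq_nonneg _)] using this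
    simpa [Real.norm_eq_abs, sq_abs] using h3
  -- eigenvalue as squared norm of P v
  have hmv : (Pᵀ * P) *ᵥ v = hH.eigenvalues i • v := hH.mulVec_eigenvectorBasis i
  have hlam : hH.eigenvalues i = ∑ p, (P *ᵥ v) p ^ 2 := by
    have h1 : ((Pᵀ * P) *ᵥ v) ⬝ᵥ v = hH.eigenvalues i := by
      rw [hmv, smul_dotProduct]
      have : v ⬝ᵥ v = 1 := by simpa [dotProduct, ← sq] using hunit
      rw [this]; simp
    have h2 : ((Pᵀ * P) *ᵥ v) ⬝ᵥ v = (P *ᵥ v) ⬝ᵥ (P *ᵥ v) := by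
      rw [← Matrix.mulVec_mulVec, Matrix.mulVec_transpose, ← Matrix.dotProduct_mulVec,
        dotProduct_comm]
    rw [← h1, h2]
    simp [dotProduct, sq]
  set R : ℝ := (1 - a)⁻¹ with hR
  set c : Fin n₁ → Fin t → ℝ :=
    fun j k => if j.1 + 1 ≤ idx k then a ^ (idx k - 1 - j.1) else 0 with hc
  have hcnn : ∀ j k, 0 ≤ c j k := by
    intro j k; simp only [hc]; split <;> positivity
  set w : Fin t → ℝ := fun k => ‖(WithLp.equiv 2 (Fin d → ℝ)).symm (fun y => v (k, y))‖ with hw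
  have hwsq : ∀ k, w k ^ 2 = ∑ y, v (k, y) ^ 2 := by
    intro k
    simp only [hw]
    rw [EuclideanSpace.norm_eq, Real.sq_sqrt (Finset.sum_nonneg fun _ _ => sq_nonneg _)]
    simp [Real.norm_eq_abs, sq_abs, WithLp.equiv_symm_apply, PiLp.toLp_apply]
  have hwsum : ∑ k, w k ^ 2 = 1 := by
    rw [← hunit, Fintype.sum_prod_type]
    exact Finset.sum_congr rfl fun k _ => (hwsq k)
  -- row sums
  have hrow : ∀ j : Fin n₁, ∑ k, c j k ≤ R := by
    intro j
    rw [hR, show ∑ k, c j k = ∑ k ∈ Finset.univ.filter (fun k => j.1 + 1 ≤ idx k),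
        a ^ (idx k - 1 - j.1) from (Finset.sum_filter _ _).symm]
    refine geom_sum_inj ha0 hA _ _ ?_
    intro k hk k' hk' h
    simp only [Finset.coe_filter, Set.mem_setOf_eq, Finset.mem_univ, true_and] at hk hk'
    have h' : idx k - 1 - j.1 = idx k' - 1 - j.1 := h
    exact hanti.injective (by omega)
  have hcol : ∀ k : Fin t, ∑ j, c j k ≤ R := by
    intro k
    rw [hR, show ∑ j, c j k = ∑ j ∈ Finset.univ.filter (fun j : Fin n₁ => j.1 + 1 ≤ idx k),
        a ^ (idx k - 1 - j.1) from (Finset.sum_filter _ _).symm]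
    refine geom_sum_inj ha0 hA _ _ ?_
    intro j hj j' hj' h
    simp only [Finset.coe_filter, Set.mem_setOf_eq, Finset.mem_univ, true_and] at hj hj'
    have h' : idx k - 1 - j.1 = idx k - 1 - j'.1 := h
    exact Fin.ext (by omega)
  -- blockwise view of P v
  set g : Fin n₁ → Fin t → (Fin d → ℝ) :=
    fun j k => if j.1 + 1 ≤ idx k then (A ^ (idx k - 1 - j.1)) *ᵥ (fun y => v (k, y)) else 0
    with hg
  have hfun : ∀ (j : Fin n₁), (fun x => (P *ᵥ v) (j, x)) = ∑ k, g j k := by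
    intro j
    funext x
    rw [Finset.sum_apply]
    show ∑ p : Fin t × Fin d, P (j, x) p * v p = _
    rw [Fintype.sum_prod_type]
    refine Finset.sum_congr rfl fun k _ => ?_
    simp only [hg]
    split
    · next h => simp only [mulVec, dotProduct]
                exact Finset.sum_congr rfl fun y _ => by rw [hP j x k y, if_pos h]
    · next h => simp only [Pi.zero_apply]
                refine Finset.sum_eq_zero fun y _ => by rw [hP j x k y, if_neg h, zero_mul]
  set F : Fin n₁ → EuclideanSpace ℝ (Fin d) :=
    fun j => (WithLp.equiv 2 (Fin d → ℝ)).symm (fun x => (P *ᵥ v) (j, x)) with hF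
  have hFsum : ∑ p, (P *ᵥ v) p ^ 2 = ∑ j, ‖F j‖ ^ 2 := by
    rw [Fintype.sum_prod_type]
    refine Finset.sum_congr rfl fun j _ => ?_
    simp only [hF]
    rw [EuclideanSpace.norm_eq, Real.sq_sqrt (Finset.sum_nonneg fun _ _ => sq_nonneg _)]
    simp [Real.norm_eq_abs, sq_abs, WithLp.equiv_symm_apply, PiLp.toLp_apply]
  have hFle : ∀ j, ‖F j‖ ≤ ∑ k, c j k * w k := by
    intro j
    have hdec : F j = ∑ k, (WithLp.equiv 2 (Fin d → ℝ)).symm (g j k) := by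
      simp only [hF, hfun j]
      have key := map_sum (WithLp.linearEquiv 2 ℝ (Fin d → ℝ)).symm (g j) Finset.univ
      simp only [WithLp.linearEquiv_symm_apply] at key
      exact key
    rw [hdec]
    refine le_trans (norm_sum_le _ _) (Finset.sum_le_sum fun k _ => ?_)
    simp only [hg, hc]
    split
    · exact pow_mulVec_norm_le A _ _
    · simp [hw]
  -- Cauchy–Schwarz on each row
  have hCS : ∀ j, (∑ k, c j k * w k) ^ 2 ≤ R * ∑ k, c j k * w k ^ 2 := by
    intro j
    have h1 := Finset.sum_mul_sq_le_sq_mul_sq Finset.univ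
      (fun k => Real.sqrt (c j k)) (fun k => Real.sqrt (c j k) * w k)
    have e1 : ∀ k : Fin t, Real.sqrt (c j k) * (Real.sqrt (c j k) * w k) = c j k * w k := by
      intro k; rw [← mul_assoc, Real.mul_self_sqrt (hcnn j k)]
    have e2 : ∀ k : Fin t, Real.sqrt (c j k) ^ 2 = c j k :=
      fun k => Real.sq_sqrt (hcnn j k)
    have e3 : ∀ k : Fin t, (Real.sqrt (c j k) * w k) ^ 2 = c j k * w k ^ 2 := by
      intro k; rw [mul_pow, Real.sq_sqrt (hcnn j k)]
    simp only [e1, e2, e3] at h1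
    refine h1.trans (mul_le_mul_of_nonneg_right (hrow j) ?_)
    exact Finset.sum_nonneg fun k _ => mul_nonneg (hcnn j k) (sq_nonneg _)
  have hmain : ∑ j, ‖F j‖ ^ 2 ≤ R ^ 2 := by
    have step1 : ∑ j, ‖F j‖ ^ 2 ≤ ∑ j, R * ∑ k, c j k * w k ^ 2 := by
      refine Finset.sum_le_sum fun j _ => ?_
      refine le_trans ?_ (hCS j)
      have hnn : (0:ℝ) ≤ ∑ k, c j k * w k :=
        Finset.sum_nonneg fun k _ => mul_nonneg (hcnn j k) (norm_nonneg _)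
      exact pow_le_pow_left₀ (norm_nonneg _) (hFle j) 2
    have step2 : ∑ j, R * ∑ k, c j k * w k ^ 2 = R * ∑ k, (∑ j, c j k) * w k ^ 2 := by
      rw [← Finset.mul_sum, Finset.sum_comm]
      congr 1
      exact Finset.sum_congr rfl fun k _ => (Finset.sum_mul _ _ _).symm
    have step3 : ∑ k, (∑ j, c j k) * w k ^ 2 ≤ ∑ k, R * w k ^ 2 :=
      Finset.sum_le_sum fun k _ => mul_le_mul_of_nonneg_right (hcol k) (sq_nonneg _)
    have hRnn : 0 ≤ R := by rw [hR]; positivity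
    calc ∑ j, ‖F j‖ ^ 2 ≤ ∑ j, R * ∑ k, c j k * w k ^ 2 := step1
      _ = R * ∑ k, (∑ j, c j k) * w k ^ 2 := step2
      _ ≤ R * ∑ k, R * w k ^ 2 := mul_le_mul_of_nonneg_left step3 hRnn
      _ = R * (R * ∑ k, w k ^ 2) := by rw [← Finset.mul_sum]
      _ = R ^ 2 := by rw [hwsum]; ring
  have hfin : R ^ 2 = 1 / (1 - a) ^ 2 := by
    rw [hR]; field_simp
  rw [hlam, hFsum, ← hfin]
  exact hmain
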